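/- Let λ be a partition of n and μ a partition of n + m with m ≥ λ₁, ᵗλ and ᵗμ close, and μ₁ ≤ m + 2. If there exists an index j ∈ [1, m+2] with ᵗμ_j = ᵗλ_j − 1, then ᵗμ_i = ᵗλ_i + 1 for all i ∈ [1, m+2] with i ≠ j (where ᵗλ is extended by zeros). -/
import Mathlib


/-- A partition, encoded as a weakly decreasing function `ℕ → ℕ` (0-indexed parts)
that is eventually zero. -/
def IsPartition (f : ℕ → ℕ) : Prop := Antitone f ∧ ∃ N, ∀ i, N ≤ i → f i = 0

/-- The conjugate (transpose) partition: `conj f i = #{j : f j ≥ i+1}` (0-indexed,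
so `conj f i` is the (i+1)-st column length, i.e. ᵗλ_{i+1}). -/
noncomputable def conj (f : ℕ → ℕ) (i : ℕ) : ℕ := Nat.card {j : ℕ // i + 1 ≤ f j}

/-- Two partitions are close if corresponding parts differ by at most 1. -/
def Close (f g : ℕ → ℕ) : Prop := ∀ i, f i ≤ g i + 1 ∧ g i ≤ f i + 1

/-- Two partitions are 2-transverse: they are close and every positive common part
(at equal indices) occurs an even number of times. -/
def Transverse2 (f g : ℕ → ℕ) : Prop :=
  Close f g ∧ ∀ p, 0 < p → Even (Nat.card {i : ℕ // f i = p ∧ g i = p})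

/-- The size |λ| of a partition: the (finite) sum of its parts. -/
noncomputable def psize (f : ℕ → ℕ) : ℕ := ∑ᶠ i, f i

/-- Prepend a part to a partition. -/
def pcons (a : ℕ) (f : ℕ → ℕ) : ℕ → ℕ
  | 0 => a
  | (i+1) => f i

/-- `RemoveTwoHook ν μ` : the partition μ is obtained from ν by removing a 2-hook,
either two adjacent blocks in one row (type (1²)) or two adjacent blocks in one
column (type (2)), the result still being a Young diagram. -/
def RemoveTwoHook (ν μ : ℕ → ℕ) : Prop :=
  IsPartition ν ∧ IsPartition μ ∧
  ((∃ i, μ i + 2 = ν i ∧ ∀ j, j ≠ i → μ j = ν j) ∨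
   (∃ i, μ i + 1 = ν i ∧ μ (i+1) + 1 = ν (i+1) ∧ ∀ j, j ≠ i → j ≠ i + 1 → μ j = ν j))

/-- If m ≥ λ₁, |μ| = n + m, μ₁ ≤ m + 2, ᵗλ and ᵗμ are close, and ᵗμ_j = ᵗλ_j − 1
for some j in the first m + 2 columns, then ᵗμ_i = ᵗλ_i + 1 for all other i in
the first m + 2 columns. (0-indexed columns.) -/
lemma conj_card (f : ℕ → ℕ) (N : ℕ) (hN : ∀ j, N ≤ j → f j = 0) (i : ℕ) :
    conj f i = ((Finset.range N).filter fun j => i + 1 ≤ f j).card := by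
  have hset : {j : ℕ | i + 1 ≤ f j} =
      ↑((Finset.range N).filter fun j => i + 1 ≤ f j) := by
    ext j
    simp only [Set.mem_setOf_eq, Finset.coe_filter, Finset.mem_range, Set.mem_setOf_eq]
    constructor
    · intro h
      refine ⟨?_, h⟩
      by_contra hb
      have := hN j (by omega)
      omega
    · exact fun h => h.2
  have key : Nat.card {j : ℕ // i + 1 ≤ f j} = Set.ncard {j : ℕ | i + 1 ≤ f j} :=
    Nat.card_coe_set_eq _
  rw [conj, key, hset, Set.ncard_coe_finset]

lemma psize_eq_sum_conj (f : ℕ → ℕ) (hf : IsPartition f) (M : ℕ) (hM : f 0 ≤ M) :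
    psize f = ∑ i ∈ Finset.range M, conj f i := by
  obtain ⟨hanti, N, hN⟩ := hf
  have h1 : psize f = ∑ j ∈ Finset.range N, f j := by
    apply finsum_eq_sum_of_support_subset
    intro j hj
    simp only [Function.mem_support] at hj
    simp only [Finset.coe_range, Set.mem_Iio]
    by_contra hb
    exact hj (hN j (by omega))
  rw [h1]
  have h2 : ∀ i, conj f i = ((Finset.range N).filter fun j => i + 1 ≤ f j).card :=
    conj_card f N hN
  simp_rw [h2, Finset.card_filter]
  rw [Finset.sum_comm]
  apply Finset.sum_congr rfl
  intro j hj
  have hfj : f j ≤ M := le_trans (hanti (Nat.zero_le j)) hM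
  rw [← Finset.card_filter]
  have : (Finset.range M).filter (fun i => i + 1 ≤ f j) = Finset.range (f j) := by
    ext i
    simp only [Finset.mem_filter, Finset.mem_range]
    omega
  rw [this, Finset.card_range]

theorem stmt16 (f μ : ℕ → ℕ) (m j : ℕ) (hf : IsPartition f) (hμ : IsPartition μ)
    (hm : f 0 ≤ m) (hsize : psize μ = psize f + m) (hμ1 : μ 0 ≤ m + 2)
    (hc : Close (conj f) (conj μ)) (hj : j < m + 2) (hje : conj μ j + 1 = conj f j) :
    ∀ i, i < m + 2 → i ≠ j → conj μ i = conj f i + 1 := by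
  have hSf : psize f = ∑ i ∈ Finset.range (m + 2), conj f i :=
    psize_eq_sum_conj f hf (m + 2) (by omega)
  have hSμ : psize μ = ∑ i ∈ Finset.range (m + 2), conj μ i :=
    psize_eq_sum_conj μ hμ (m + 2) hμ1
  set d : ℕ → ℤ := fun i => (conj μ i : ℤ) - conj f i with hd
  have hsum : ∑ i ∈ Finset.range (m + 2), d i = m := by
    have := hsize
    rw [hSf, hSμ] at this
    have : ((∑ i ∈ Finset.range (m + 2), conj μ i : ℕ) : ℤ)
        = (∑ i ∈ Finset.range (m + 2), conj f i : ℕ) + m := by exact_mod_cast this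
    push_cast at this
    simp only [hd, Finset.sum_sub_distrib]
    omega
  intro i hi hij
  by_contra hne
  have h1 : d i ≤ 0 := by
    have := (hc i).2
    simp only [hd]
    omega
  have hjle : d j = -1 := by simp only [hd]; omega
  have hjmem : j ∈ Finset.range (m + 2) := Finset.mem_range.mpr hj
  have himem : i ∈ (Finset.range (m + 2)).erase j :=
    Finset.mem_erase.mpr ⟨hij, Finset.mem_range.mpr hi⟩
  have e1 : ∑ k ∈ Finset.range (m + 2), d k
      = d j + ∑ k ∈ (Finset.range (m + 2)).erase j, d k :=
    (Finset.add_sum_erase _ d hjmem).symm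
  have e2 : ∑ k ∈ (Finset.range (m + 2)).erase j, d k
      = d i + ∑ k ∈ ((Finset.range (m + 2)).erase j).erase i, d k :=
    (Finset.add_sum_erase _ d himem).symm
  have hbd : ∑ k ∈ ((Finset.range (m + 2)).erase j).erase i, d k
      ≤ (((Finset.range (m + 2)).erase j).erase i).card • (1 : ℤ) := by
    apply Finset.sum_le_card_nsmul
    intro k _
    have := (hc k).2
    simp only [hd]
    omega
  have hcard : (((Finset.range (m + 2)).erase j).erase i).card = m := by
    rw [Finset.card_erase_of_mem himem, Finset.card_erase_of_mem hjmem,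
      Finset.card_range]
    omega
  rw [hcard] at hbd
  simp only [nsmul_eq_mul] at hbd
  omega
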